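/- Let p > 0, λ > 0, σ = (π/4)·min{1,1/p}, and let f(z) = exp(-λ√2·z^{-p}) be holomorphic on ℂ ∖ (-∞,0]. Then for every x > 0, the maximum of |f| over the closed disk of center x and radius x·sin σ is at most exp(-λ/(2x)^p). -/

import Mathlib

open Real Complex

set_option maxHeartbeats 1000000 in
/-- for `f(z) = exp(-λ√2·z^{-p})` (principal branch), `x > 0`, and `z` in the
closed disk of center `x` and radius `x·sin σ`, one has `|f(z)| ≤ exp(-λ/(2x)^p)`. -/
theorem max_abs_on_disk_le
    (p lam : ℝ) (hp : 0 < p) (hlam : 0 < lam)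
    (σ : ℝ) (hσ : σ = (Real.pi / 4) * min 1 (1 / p))
    (x : ℝ) (hx : 0 < x)
    (z : ℂ) (hz : z ∈ Metric.closedBall (x : ℂ) (x * Real.sin σ)) :
    ‖Complex.exp (-(((lam * Real.sqrt 2 : ℝ)) : ℂ) * z ^ (-(p : ℂ)))‖
      ≤ Real.exp (-lam / (2 * x) ^ p) := by
  have hmin : 0 < min 1 (1 / p) := lt_min one_pos (by positivity)
  have hσ0 : 0 < σ := by rw [hσ]; positivity
  have hσ4 : σ ≤ Real.pi / 4 := by
    rw [hσ]
    nlinarith [min_le_left 1 (1/p), Real.pi_pos]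
  have hσ2 : σ < Real.pi / 2 := lt_of_le_of_lt hσ4 (by linarith [Real.pi_pos])
  set s := Real.sin σ with hs
  have hs0 : 0 < s := Real.sin_pos_of_pos_of_lt_pi hσ0 (by linarith [Real.pi_pos])
  have hc0 : 0 < Real.cos σ := Real.cos_pos_of_mem_Ioo ⟨by linarith, hσ2⟩
  have hs1 : s < 1 := by nlinarith [Real.sin_sq_add_cos_sq σ]
  -- distance bound
  have hd : ‖z - (x:ℂ)‖ ≤ x * s := by
    simpa [Complex.dist_eq] using (Metric.mem_closedBall.mp hz)
  set a := z.re with ha'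
  set b := z.im with hb'
  have hsq : (a - x)^2 + b^2 ≤ (x*s)^2 := by
    have h0 := Complex.sq_norm (z - (x:ℂ))
    have h2 : ‖z - (x:ℂ)‖ ^ 2 ≤ (x*s)^2 :=
      pow_le_pow_left₀ (norm_nonneg _) hd 2
    rw [h0] at h2
    simpa [Complex.normSq_apply, sq] using h2
  have hax : -(x*s) ≤ a - x := by
    nlinarith [sq_nonneg (a - x + x*s), sq_nonneg b, mul_pos hx hs0]
  have hapos : 0 < a := by nlinarith [mul_pos hx (show (0:ℝ) < 1 - s by linarith)]
  have hzne : z ≠ 0 := by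
    intro h; rw [ha', h] at hapos; simp at hapos
  set r := ‖z‖ with hr
  have hr0 : 0 < r := norm_pos_iff.mpr hzne
  have hr2 : r^2 = a^2 + b^2 := by
    rw [hr, Complex.sq_norm, Complex.normSq_apply]; ring
  -- key sector inequality
  have h1s : (0:ℝ) ≤ 1 - s^2 := by nlinarith
  have hkey : (1 - s^2) * b^2 ≤ s^2 * a^2 := by
    nlinarith [sq_nonneg (a - (1 - s^2)*x), mul_le_mul_of_nonneg_left hsq h1s]
  have hb2 : b^2 ≤ (r*s)^2 := by nlinarith
  have hbr : |b| ≤ r * s := by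
    by_contra hcon
    push_neg at hcon
    nlinarith [_root_.sq_abs b, abs_nonneg b, mul_nonneg hr0.le hs0.le]
  -- arg bound
  have harg : |Complex.arg z| ≤ σ := by
    rw [Complex.arg_of_re_nonneg hapos.le]
    have h3 : Real.arcsin s = σ := Real.arcsin_sin (by linarith) (by linarith)
    have hle : z.im / ‖z‖ ≤ s := by
      rw [div_le_iff₀ hr0]
      calc z.im ≤ |b| := le_abs_self _
        _ ≤ r * s := hbr
        _ = s * r := by ring
    have hge : -s ≤ z.im / ‖z‖ := by
      rw [le_div_iff₀ hr0]
      have : -(r * s) ≤ z.im := by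
        have := neg_abs_le b; linarith
      linarith [this]
    rw [abs_le]
    constructor
    · have h4 := Real.monotone_arcsin hge
      rw [Real.arcsin_neg, h3] at h4; exact h4
    · have h4 := Real.monotone_arcsin hle
      rw [h3] at h4; exact h4
  -- p * σ ≤ π/4
  have hpσ : p * σ ≤ Real.pi / 4 := by
    rw [hσ]
    have h1 : p * min 1 (1/p) ≤ 1 := by
      calc p * min 1 (1/p) ≤ p * (1/p) :=
            mul_le_mul_of_nonneg_left (min_le_right _ _) hp.le
        _ = 1 := by field_simp
    nlinarith [Real.pi_pos]
  have hcosarg : Real.sqrt 2 / 2 ≤ Real.cos (p * Complex.arg z) := by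
    have h1 : |p * Complex.arg z| ≤ Real.pi / 4 := by
      rw [abs_mul, abs_of_pos hp]
      calc p * |Complex.arg z| ≤ p * σ := mul_le_mul_of_nonneg_left harg hp.le
        _ ≤ Real.pi / 4 := hpσ
    calc Real.sqrt 2 / 2 = Real.cos (Real.pi / 4) := (Real.cos_pi_div_four).symm
      _ ≤ Real.cos |p * Complex.arg z| :=
          Real.cos_le_cos_of_nonneg_of_le_pi (abs_nonneg _) (by linarith [Real.pi_pos]) h1
      _ = Real.cos (p * Complex.arg z) := Real.cos_abs _
  -- real part of z ^ (-p)
  have hcpow : (z ^ (-(p : ℂ))).re = r ^ (-p) * Real.cos (p * Complex.arg z) := by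
    rw [Complex.cpow_def_of_ne_zero hzne, Complex.exp_re]
    have h1 : (Complex.log z * -(p:ℂ)).re = Real.log r * -p := by
      simp [Complex.mul_re, Complex.log_re, Complex.log_im, hr]
    have h2 : (Complex.log z * -(p:ℂ)).im = Complex.arg z * -p := by
      simp [Complex.mul_im, Complex.log_re, Complex.log_im]
    rw [h1, h2, show Complex.arg z * -p = -(p * Complex.arg z) by ring, Real.cos_neg]
    congr 1
    rw [Real.rpow_def_of_pos hr0]
  -- |z| ≤ 2x
  have hr2x : r ≤ 2 * x := by
    have h1 : ‖(x:ℂ)‖ = x := by rw [Complex.norm_real, Real.norm_of_nonneg hx.le]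
    calc r = ‖(z - (x:ℂ)) + (x:ℂ)‖ := by rw [hr]; ring_nf
      _ ≤ ‖z - (x:ℂ)‖ + ‖(x:ℂ)‖ := norm_add_le _ _
      _ ≤ x * s + x := by rw [h1]; linarith
      _ ≤ 2 * x := by nlinarith
  have hrp : (2*x) ^ (-p) ≤ r ^ (-p) :=
    Real.rpow_le_rpow_of_nonpos hr0 hr2x (by linarith)
  -- main estimate on re
  have h2x : (0:ℝ) < (2*x) ^ (-p) := Real.rpow_pos_of_pos (by linarith) _
  have hsqrt2 : Real.sqrt 2 * (Real.sqrt 2 / 2) = 1 := by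
    rw [div_eq_mul_inv, ← mul_assoc, Real.mul_self_sqrt (by norm_num : (0:ℝ) ≤ 2)]
    norm_num
  have hre : (-(((lam * Real.sqrt 2 : ℝ)) : ℂ) * z ^ (-(p : ℂ))).re ≤ -lam / (2 * x) ^ p := by
    have hre1 : (-(((lam * Real.sqrt 2 : ℝ)) : ℂ) * z ^ (-(p : ℂ))).re
        = -((lam * Real.sqrt 2) * (z ^ (-(p : ℂ))).re) := by
      rw [neg_mul, Complex.neg_re, Complex.re_ofReal_mul]
    rw [hre1, hcpow]
    have hchain : lam * (2*x) ^ (-p)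
        ≤ lam * Real.sqrt 2 * (r ^ (-p) * Real.cos (p * Complex.arg z)) := by
      have step1 : lam * (2*x) ^ (-p)
          = lam * Real.sqrt 2 * ((2*x) ^ (-p) * (Real.sqrt 2 / 2)) := by
        have : lam * Real.sqrt 2 * ((2*x) ^ (-p) * (Real.sqrt 2 / 2))
            = lam * (2*x) ^ (-p) * (Real.sqrt 2 * (Real.sqrt 2 / 2)) := by ring
        rw [this, hsqrt2, mul_one]
      rw [step1]
      apply mul_le_mul_of_nonneg_left _ (by positivity)
      exact mul_le_mul hrp hcosarg (by positivity) (by positivity)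
    have heq : -lam / (2 * x) ^ p = -(lam * (2*x) ^ (-p)) := by
      rw [Real.rpow_neg (by linarith)]
      field_simp
    rw [heq]
    linarith
  calc ‖Complex.exp (-(((lam * Real.sqrt 2 : ℝ)) : ℂ) * z ^ (-(p : ℂ)))‖
      = Real.exp ((-(((lam * Real.sqrt 2 : ℝ)) : ℂ) * z ^ (-(p : ℂ))).re) := Complex.norm_exp _
    _ ≤ Real.exp (-lam / (2 * x) ^ p) := Real.exp_le_exp.mpr hre
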